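/- For E ≻ 0, Y ∈ ℝ^{m×n}, γ > 0, a row vector H_i ∈ ℝ^{1×m} and scalar h_i > 0: the LMI [[h_i², H_i Y], [(H_i Y)ᵀ, E/γ]] ⪰ 0 implies that the linear feedback u(x) = YE⁻¹x satisfies the constraint H_i u(x) ≤ h_i for every x in the ellipsoid {x | xᵀE⁻¹x ≤ γ}. -/

import Mathlib

open Matrix

/-- the LMI [[h_i², H_i Y], [(H_i Y)ᵀ, E/γ]] ⪰ 0 implies that
the linear feedback u(x) = YE⁻¹x satisfies H_i u(x) ≤ h_i on the ellipsoid
{x | xᵀE⁻¹x ≤ γ}. -/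
theorem lmi_implies_input_constraint
    {n m : ℕ} (E : Matrix (Fin n) (Fin n) ℝ) (Y : Matrix (Fin m) (Fin n) ℝ)
    (γ : ℝ) (hγ : 0 < γ) (hE : E.PosDef)
    (Hi : Fin m → ℝ) (hi : ℝ) (hhi : 0 < hi)
    (hLMI : (Matrix.fromBlocks
        (Matrix.of fun _ _ : Unit => hi ^ 2)
        (Matrix.of fun (_ : Unit) (j : Fin n) => (Hi ᵥ* Y) j)
        (Matrix.of fun (i : Fin n) (_ : Unit) => (Hi ᵥ* Y) i)
        (γ⁻¹ • E)).PosSemidef) :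
    ∀ x : Fin n → ℝ, x ⬝ᵥ (E⁻¹ *ᵥ x) ≤ γ →
      Hi ⬝ᵥ ((Y * E⁻¹) *ᵥ x) ≤ hi := by
  intro x hx
  set z : Fin n → ℝ := E⁻¹ *ᵥ x with hz
  set v : Fin n → ℝ := Hi ᵥ* Y with hv
  have hgoal : Hi ⬝ᵥ ((Y * E⁻¹) *ᵥ x) = v ⬝ᵥ z := by
    rw [← Matrix.mulVec_mulVec, Matrix.dotProduct_mulVec]
  rw [hgoal]
  have hdet : IsUnit E.det := hE.det_pos.ne'.isUnit
  have hEz : E *ᵥ z = x := by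
    rw [hz, Matrix.mulVec_mulVec, Matrix.mul_nonsing_inv E hdet, Matrix.one_mulVec]
  have hq : z ⬝ᵥ (E *ᵥ z) ≤ γ := by rw [hEz, dotProduct_comm]; exact hx
  have hq0 : 0 ≤ z ⬝ᵥ (E *ᵥ z) := hE.posSemidef.dotProduct_mulVec_nonneg z
  have key := hLMI.dotProduct_mulVec_nonneg (Sum.elim (fun _ : Unit => -hi⁻¹) z)
  rw [Matrix.fromBlocks_mulVec] at key
  simp only [star_trivial, dotProduct, Fintype.sum_sum_type, Sum.elim_inl, Sum.elim_inr,
    Matrix.mulVec, dotProduct, Pi.add_apply, Matrix.of_apply, Finset.univ_unique,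
    Finset.sum_singleton, Matrix.smul_apply, Pi.smul_apply, smul_eq_mul,
    Function.comp_apply, Sum.elim_inl, Sum.elim_inr] at key
  have hQdef : z ⬝ᵥ (E *ᵥ z) = ∑ j, z j * ∑ k, E j k * z k := rfl
  have hSdef : v ⬝ᵥ z = ∑ j, v j * z j := rfl
  have e1 : ∑ j, z j * (v j * -hi⁻¹ + ∑ k, γ⁻¹ * E j k * z k)
      = -hi⁻¹ * (∑ j, v j * z j) + γ⁻¹ * (∑ j, z j * ∑ k, E j k * z k) := by
    rw [Finset.mul_sum, Finset.mul_sum, ← Finset.sum_add_distrib]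
    refine Finset.sum_congr rfl fun j _ => ?_
    simp only [mul_assoc, ← Finset.mul_sum]
    ring
  rw [e1, ← hQdef, ← hSdef] at key
  have hinv : hi⁻¹ * hi = 1 := inv_mul_cancel₀ hhi.ne'
  have h2 : γ⁻¹ * (z ⬝ᵥ (E *ᵥ z)) ≤ 1 := by
    rw [inv_mul_le_iff₀ hγ]; simpa using hq
  have hinv2 : hi⁻¹ * (hi ^ 2 * hi⁻¹) = 1 := by field_simp
  have h3 : hi⁻¹ * (v ⬝ᵥ z) ≤ 1 := by nlinarith [key, h2, hinv2]
  have h4 := mul_le_mul_of_nonneg_left h3 hhi.le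
  calc v ⬝ᵥ z = hi * (hi⁻¹ * (v ⬝ᵥ z)) := by
        rw [← mul_assoc, mul_inv_cancel₀ hhi.ne', one_mul]
    _ ≤ hi := by simpa using h4
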